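/- Let R = A ×_k B be the fiber product of positively graded Noetherian k-algebras over a field k, and let M be a graded A-module viewed as an R-module via π_1 : R → A. Then tr_R(M) ⊆ tr_A(M)·R ⊕ ((0 :_B m_B))·R. -/

import Mathlib

set_option synthInstance.maxHeartbeats 1000000
set_option maxHeartbeats 1000000

noncomputable section

/-- The fiber product `A ×ₖ B = {(a,b) : f a = g b}`, as a subalgebra of `A × B`. -/
def fiberProd {k A B : Type*} [CommSemiring k] [Semiring A] [Semiring B]
    [Algebra k A] [Algebra k B] (f : A →ₐ[k] k) (g : B →ₐ[k] k) : Subalgebra k (A × B) :=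
  AlgHom.equalizer (f.comp (AlgHom.fst k A B)) (g.comp (AlgHom.snd k A B))

/-- The canonical map `ι₁ : A → A ×ₖ B`, `a ↦ (a, f a)`. -/
def fiberProdInl {k A B : Type*} [CommSemiring k] [Semiring A] [Semiring B]
    [Algebra k A] [Algebra k B] (f : A →ₐ[k] k) (g : B →ₐ[k] k) :
    A →ₐ[k] fiberProd f g :=
  AlgHom.codRestrict ((AlgHom.id k A).prod ((Algebra.ofId k B).comp f)) (fiberProd f g)
    (fun a => by show f a = g (algebraMap k B (f a)); simp)

/-- The canonical map `ι₂ : B → A ×ₖ B`, `b ↦ (g b, b)`. -/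
def fiberProdInr {k A B : Type*} [CommSemiring k] [Semiring A] [Semiring B]
    [Algebra k A] [Algebra k B] (f : A →ₐ[k] k) (g : B →ₐ[k] k) :
    B →ₐ[k] fiberProd f g :=
  AlgHom.codRestrict (((Algebra.ofId k A).comp g).prod (AlgHom.id k B)) (fiberProd f g)
    (fun b => by show f (algebraMap k A (g b)) = g b; simp)


theorem aux_proj_zero_eq {k A : Type*} [Field k] [CommRing A] [Algebra k A]
    (𝒜 : ℕ → Submodule k A) [GradedAlgebra 𝒜]
    (h𝒜 : 𝒜 0 ≤ LinearMap.range (Algebra.linearMap k A))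
    (f : A →ₐ[k] k) (hf : ∀ i, 0 < i → ∀ a ∈ 𝒜 i, f a = 0) (y : A) :
    algebraMap k A (f y) = (DirectSum.decompose 𝒜 y 0 : A) := by
  have h1 : ∀ z : A, f z = f (DirectSum.decompose 𝒜 z 0 : A) := by
    intro z
    induction z using DirectSum.Decomposition.inductionOn 𝒜 with
    | zero => simp
    | @homogeneous i m =>
      rcases Nat.eq_zero_or_pos i with hi | hi
      · subst hi
        rw [DirectSum.decompose_coe, DirectSum.of_eq_same]
      · rw [DirectSum.decompose_coe, DirectSum.of_eq_of_ne _ _ _ (by omega)]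
        simp [hf i hi m m.2]
    | add m m' hm hm' =>
      rw [map_add, hm, hm', ← map_add f, ← Submodule.coe_add, ← DirectSum.add_apply,
        ← DirectSum.decompose_add]
  obtain ⟨c, hc⟩ := h𝒜 (SetLike.coe_mem (DirectSum.decompose 𝒜 y 0))
  have hc' : algebraMap k A c = (DirectSum.decompose 𝒜 y 0 : A) := hc
  rw [h1 y, ← hc']
  simp

theorem aux_trace_mem {k A : Type*} [Field k] [CommRing A] [Algebra k A]
    (𝒜 : ℕ → Submodule k A) [GradedAlgebra 𝒜]
    (h𝒜 : 𝒜 0 ≤ LinearMap.range (Algebra.linearMap k A))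
    (f : A →ₐ[k] k) (hf : ∀ i, 0 < i → ∀ a ∈ 𝒜 i, f a = 0)
    {M : Type*} [AddCommGroup M] [Module A M]
    (𝓜 : ℕ → AddSubgroup M) [DirectSum.Decomposition 𝓜]
    (hgr : ∀ i j, ∀ a ∈ 𝒜 i, ∀ x ∈ 𝓜 j, a • x ∈ 𝓜 (i + j))
    (ψ : M →ₗ[A] A) (x : M) :
    algebraMap k A (f (ψ x)) ∈ ⨆ ψ : M →ₗ[A] A, LinearMap.range ψ := by
  classical
  -- the shifted component maps of ψ
  have key : ∀ j : ℕ, ∃ χ : M →ₗ[A] A, ∀ i (m : 𝓜 i),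
      χ (m : M) = if j ≤ i then (DirectSum.decompose 𝒜 (ψ (m : M)) (i - j) : A) else 0 := by
    intro j
    let F : ∀ i, 𝓜 i →+ A := fun i =>
      { toFun := fun m => if j ≤ i then (DirectSum.decompose 𝒜 (ψ (m : M)) (i - j) : A) else 0
        map_zero' := by simp
        map_add' := by
          intro m m'
          split_ifs <;> simp }
    let χ₀ : M →+ A := (DirectSum.toAddMonoid F).comp
      (DirectSum.decomposeAddEquiv 𝓜).toAddMonoidHom
    have hχ₀ : ∀ i (m : 𝓜 i), χ₀ (m : M) =
        if j ≤ i then (DirectSum.decompose 𝒜 (ψ (m : M)) (i - j) : A) else 0 := by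
      intro i m
      show (DirectSum.toAddMonoid F) (DirectSum.decomposeAddEquiv 𝓜 (m : M)) = _
      rw [DirectSum.decomposeAddEquiv_apply, DirectSum.decompose_coe,
        DirectSum.toAddMonoid_of]
      rfl
    have hsmul : ∀ (a : A) (m : M), χ₀ (a • m) = a * χ₀ m := by
      intro a
      induction a using DirectSum.Decomposition.inductionOn 𝒜 with
      | zero => intro m; simp
      | @homogeneous e a =>
        intro m
        induction m using DirectSum.Decomposition.inductionOn 𝓜 with
        | zero => simp
        | @homogeneous i m =>
          have hmem : (a : A) • (m : M) ∈ 𝓜 (e + i) := hgr e i a a.2 m m.2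
          have h2 : ((a : A) • (m : M)) = ((⟨_, hmem⟩ : 𝓜 (e + i)) : M) := rfl
          rw [h2, hχ₀ (e + i) ⟨_, hmem⟩, hχ₀ i m]
          have h3 : ψ ((⟨_, hmem⟩ : 𝓜 (e + i)) : M) = (a : A) * ψ (m : M) := by
            show ψ ((a : A) • (m : M)) = _
            rw [map_smul, smul_eq_mul]
          rw [h3]
          by_cases h5 : j ≤ i
          · rw [if_pos (by omega : j ≤ e + i), if_pos h5,
              DirectSum.coe_decompose_mul_of_left_mem_of_le 𝒜 a.2 (by omega)]
            have h6 : e + i - j - e = i - j := by omega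
            rw [h6]
          · by_cases h4 : j ≤ e + i
            · rw [if_pos h4, if_neg h5,
                DirectSum.coe_decompose_mul_of_left_mem_of_not_le 𝒜 a.2 (by omega), mul_zero]
            · rw [if_neg h4, if_neg h5, mul_zero]
        | add m m' hm hm' =>
          rw [smul_add, map_add, hm, hm', map_add, mul_add]
      | add a a' ha ha' =>
        intro m
        rw [add_smul, map_add, ha, ha', add_mul]
    exact ⟨{ toFun := χ₀, map_add' := χ₀.map_add,
             map_smul' := fun a m => by simp only [RingHom.id_apply, smul_eq_mul]; exact hsmul a m },
           hχ₀⟩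
  choose χ hχ using key
  rw [← DirectSum.sum_support_decompose 𝓜 x, map_sum, map_sum, map_sum]
  apply Submodule.sum_mem
  intro j hj
  rw [aux_proj_zero_eq 𝒜 h𝒜 f hf]
  have : (DirectSum.decompose 𝒜 (ψ ((DirectSum.decompose 𝓜 x j : M))) 0 : A)
      = χ j ((DirectSum.decompose 𝓜 x j : M)) := by
    rw [hχ j j (DirectSum.decompose 𝓜 x j), if_pos le_rfl, Nat.sub_self]
  rw [this]
  exact le_iSup (fun ψ : M →ₗ[A] A => LinearMap.range ψ) (χ j) ⟨_, rfl⟩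

/-- Let `R = A ×ₖ B` be the fiber product of positively graded Noetherian
`k`-algebras over a field `k`, and let `M` be a graded `A`-module viewed as an `R`-module via
`π₁ : R → A`. Then `tr_R(M) ⊆ tr_A(M)·R ⊕ (0 :_B m_B)·R`. -/
theorem fiberProd_trace_le {k A B : Type*} [Field k] [CommRing A] [CommRing B]
    [Algebra k A] [Algebra k B] [IsNoetherianRing A] [IsNoetherianRing B]
    (𝒜 : ℕ → Submodule k A) (ℬ : ℕ → Submodule k B)
    [GradedAlgebra 𝒜] [GradedAlgebra ℬ]
    (h𝒜 : 𝒜 0 ≤ LinearMap.range (Algebra.linearMap k A))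
    (hℬ : ℬ 0 ≤ LinearMap.range (Algebra.linearMap k B))
    (f : A →ₐ[k] k) (g : B →ₐ[k] k)
    (hf : ∀ i, 0 < i → ∀ a ∈ 𝒜 i, f a = 0)
    (hg : ∀ i, 0 < i → ∀ b ∈ ℬ i, g b = 0)
    (M : Type*) [AddCommGroup M] [Module A M]
    (𝓜 : ℕ → AddSubgroup M) [DirectSum.Decomposition 𝓜]
    (hgr : ∀ i j, ∀ a ∈ 𝒜 i, ∀ x ∈ 𝓜 j, a • x ∈ 𝓜 (i + j))
    [Module (fiberProd f g) M]
    (hcomp : ∀ (r : fiberProd f g) (x : M), r • x = ((r : A × B).1) • x) :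
    (⨆ φ : M →ₗ[fiberProd f g] fiberProd f g, LinearMap.range φ)
      ≤ Ideal.map (fiberProdInl f g) (⨆ ψ : M →ₗ[A] A, LinearMap.range ψ)
          ⊔ Ideal.map (fiberProdInr f g) ((RingHom.ker g : Ideal B).annihilator) := by
  refine iSup_le fun φ => ?_
  rintro _ ⟨x, rfl⟩
  -- the first-coordinate map is A-linear
  have hinl1 : ∀ c : A, ((fiberProdInl f g c : A × B)).1 = c := fun c => rfl
  have hinl2 : ∀ c : A, ((fiberProdInl f g c : A × B)).2 = algebraMap k B (f c) := fun c => rfl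
  have hinr1 : ∀ c : B, ((fiberProdInr f g c : A × B)).1 = algebraMap k A (g c) := fun c => rfl
  have hinr2 : ∀ c : B, ((fiberProdInr f g c : A × B)).2 = c := fun c => rfl
  let ψ : M →ₗ[A] A :=
    { toFun := fun m => ((φ m : A × B)).1
      map_add' := by
        intro m m'
        show ((φ (m + m') : A × B)).1 = ((φ m : A × B)).1 + ((φ m' : A × B)).1
        rw [map_add]
        rfl
      map_smul' := by
        intro c m
        show ((φ (c • m) : A × B)).1 = c • ((φ m : A × B)).1
        have h1 : c • m = (fiberProdInl f g c) • m := by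
          rw [hcomp, hinl1]
        rw [h1, map_smul, smul_eq_mul, smul_eq_mul, MulMemClass.coe_mul, Prod.fst_mul, hinl1] }
  set r : fiberProd f g := φ x with hr
  set a : A := ((r : A × B)).1 with ha
  set b : B := ((r : A × B)).2 with hb
  have hfg : f a = g b := r.2
  have hψx : ψ x = a := rfl
  -- b annihilates ker g
  have hbann : b ∈ (RingHom.ker g : Ideal B).annihilator := by
    rw [Submodule.mem_annihilator]
    intro c hc
    have hgc : g c = 0 := hc
    set s : fiberProd f g := fiberProdInr f g c with hs
    have hs1 : ((s : A × B)).1 = 0 := by rw [hs, hinr1, hgc, map_zero]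
    have hsx : s • x = 0 := by rw [hcomp, hs1, zero_smul]
    have h2 : s * r = 0 := by
      have h2' : φ (s • x) = s • φ x := map_smul φ s x
      rw [hsx, map_zero] at h2'
      rw [← smul_eq_mul, hr]
      exact h2'.symm
    have h3 : c * b = 0 := by
      have := congrArg (fun t : fiberProd f g => ((t : A × B)).2) h2
      simpa [hs, hinr2] using this
    rw [smul_eq_mul, mul_comm]
    exact h3
  -- a - algebraMap k A (f a) lies in the trace ideal of M over A
  have haT : a - algebraMap k A (f a) ∈ ⨆ ψ : M →ₗ[A] A, LinearMap.range ψ := by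
    refine sub_mem ?_ ?_
    · exact le_iSup (fun ψ : M →ₗ[A] A => LinearMap.range ψ) ψ ⟨x, hψx⟩
    · have := aux_trace_mem 𝒜 h𝒜 f hf 𝓜 hgr ψ x
      rwa [hψx] at this
  -- decompose r
  have hdecomp : r = fiberProdInl f g (a - algebraMap k A (f a)) + fiberProdInr f g b := by
    apply Subtype.ext
    apply Prod.ext
    · show a = _
      have : ((fiberProdInl f g (a - algebraMap k A (f a)) + fiberProdInr f g b : fiberProd f g)
          : A × B).1 = (a - algebraMap k A (f a)) + algebraMap k A (g b) := by
        rw [Subalgebra.coe_add, Prod.fst_add, hinl1, hinr1]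
      rw [this, ← hfg]
      ring
    · show b = _
      have : ((fiberProdInl f g (a - algebraMap k A (f a)) + fiberProdInr f g b : fiberProd f g)
          : A × B).2 = algebraMap k B (f (a - algebraMap k A (f a))) + b := by
        rw [Subalgebra.coe_add, Prod.snd_add, hinl2, hinr2]
      rw [this]
      have hf0 : f (a - algebraMap k A (f a)) = 0 := by
        rw [map_sub, AlgHom.commutes]
        simp
      rw [hf0, map_zero, zero_add]
  rw [hdecomp]
  exact Submodule.add_mem _
    (Ideal.mem_sup_left (Ideal.mem_map_of_mem _ haT))
    (Ideal.mem_sup_right (Ideal.mem_map_of_mem _ hbann))
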